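/- arXiv:1602.07195 — 6 statements merged into one kernel-verified Lean document; each statement's English description precedes it below -/
import Mathlib

section
/- Let β > 1 and α ∈ (0,1). There exists a constant C > 0 (depending only on β and α) such that for all natural numbers n, m ≥ 1 and k ≥ 2 with mk ≤ αn, the ratio of Zipf tail sums satisfies (Σ_{i=k}^{n} i^{−β}) / (Σ_{i=mk+1}^{n} i^{−β}) ≤ C · m^{β−1}. -/
open Finset MeasureTheory

/-- Zipf tail-sum ratio bound for `β > 1`: there is a constant `C > 0` depending only on
`β` and `α` such that for all `n`, `m ≥ 1`, `k ≥ 2` with `mk ≤ αn`,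
`(∑_{i=k}^n i^{−β}) / (∑_{i=mk+1}^n i^{−β}) ≤ C · m^{β−1}`. -/
theorem zipf_ratio_beta_gt_one (β α : ℝ) (hβ : 1 < β) (hα0 : 0 < α) (hα1 : α < 1) :
    ∃ C : ℝ, 0 < C ∧ ∀ n m k : ℕ, 1 ≤ m → 2 ≤ k → (m : ℝ) * k ≤ α * n →
      (∑ i ∈ Finset.Icc k n, (i : ℝ) ^ (-β)) /
          (∑ i ∈ Finset.Icc (m * k + 1) n, (i : ℝ) ^ (-β)) ≤
        C * (m : ℝ) ^ (β - 1) := by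
  have hβ1 : 0 < β - 1 := by linarith
  set p : ℝ := -β + 1 with hp
  clear_value p
  have hp0 : p < 0 := by rw [hp]; linarith
  have hpneg : p = -(β - 1) := by rw [hp]; ring
  set r : ℝ := (2 / α + 1) / 3 with hrdef
  clear_value r
  have hr1 : 1 < r := by
    have : 2 < 2 / α := by rw [lt_div_iff₀ hα0]; linarith
    rw [hrdef]; linarith
  have hrpos : 0 < r := lt_trans one_pos hr1
  have hrp : r ^ p < 1 := Real.rpow_lt_one_of_one_lt_of_neg hr1 hp0
  have hrpD : 0 < 1 - r ^ p := by linarith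
  have h32 : (0:ℝ) < 3 / 2 := by norm_num
  set C : ℝ := β * (3 / 2 : ℝ) ^ (β - 1) / (1 - r ^ p) with hCdef
  clear_value C
  have hCpos : 0 < C := by
    rw [hCdef]
    exact div_pos (mul_pos (by linarith : (0:ℝ) < β) (Real.rpow_pos_of_pos h32 _)) hrpD
  refine ⟨C, hCpos, ?_⟩
  intro n m k hm hk hmk
  have hm0 : (0:ℝ) < m := by exact_mod_cast hm
  have hk0 : (0:ℝ) < k := by positivity
  have hk1 : (1:ℝ) ≤ k := by exact_mod_cast hk.trans' (by norm_num)
  set M := m * k with hMdef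
  clear_value M
  have hM2 : 2 ≤ M := by rw [hMdef]; exact le_trans hk (Nat.le_mul_of_pos_left k hm)
  have hMr : ((M:ℕ):ℝ) = (m:ℝ) * k := by push_cast [hMdef]; ring
  have hMpos : (0:ℝ) < M := by rw [hMr]; positivity
  have hMR2 : (2:ℝ) ≤ M := by exact_mod_cast hM2
  have hnR : (M:ℝ) ≤ α * n := by rw [hMr]; exact hmk
  have hMn : M < n := by
    by_contra h
    push_neg at h
    have hn : (n:ℝ) ≤ M := by exact_mod_cast h
    nlinarith
  have hkn : k ≤ n := by
    have := Nat.le_mul_of_pos_left k hm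
    omega
  have hf_anti : ∀ a b : ℝ, 0 < a → AntitoneOn (fun x : ℝ => x ^ (-β)) (Set.Icc a b) := by
    intro a b ha x hx y hy hxy
    exact Real.rpow_le_rpow_of_nonpos (lt_of_lt_of_le ha hx.1) hxy (by linarith)
  -- Denominator lower bound
  have hn1 : r * ((M:ℝ) + 1) ≤ (n:ℝ) + 1 := by
    have hr' : α * r = (2 + α) / 3 := by rw [hrdef]; field_simp
    have key : α * (r * ((M:ℝ) + 1)) ≤ α * ((n:ℝ) + 1) := by
      rw [← mul_assoc, hr']
      nlinarith [mul_nonneg (sub_nonneg.2 hMR2) (sub_nonneg.2 hα1.le)]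
    exact le_of_mul_le_mul_left key hα0
  have hDint : (∫ x in ((M + 1 : ℕ):ℝ)..((n + 1 : ℕ):ℝ), x ^ (-β)) ≤
      ∑ i ∈ Icc (M + 1) n, (i : ℝ) ^ (-β) := by
    have h := AntitoneOn.integral_le_sum_Ico (f := fun x : ℝ => x ^ (-β))
      (a := M + 1) (b := n + 1) (by omega) (hf_anti _ _ (by positivity))
    rwa [Finset.Ico_add_one_right_eq_Icc] at h
  have hDval : (∫ x in ((M + 1 : ℕ):ℝ)..((n + 1 : ℕ):ℝ), x ^ (-β)) =
      (((M:ℝ) + 1) ^ p - ((n:ℝ) + 1) ^ p) / (β - 1) := by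
    rw [integral_rpow (Or.inr ⟨by linarith, Set.notMem_uIcc_of_lt (by positivity) (by positivity)⟩)]
    push_cast
    rw [div_eq_div_iff (by linarith) (ne_of_gt hβ1), hp]
    ring
  have hn1p : ((n:ℝ) + 1) ^ p ≤ r ^ p * ((M:ℝ) + 1) ^ p := by
    have h := Real.rpow_le_rpow_of_nonpos (by positivity) hn1 hp0.le
    rwa [Real.mul_rpow hrpos.le (by positivity)] at h
  have hM1p : (3 / 2 : ℝ) ^ p * ((m:ℝ) ^ p * (k:ℝ) ^ p) ≤ ((M:ℝ) + 1) ^ p := by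
    have h1 : (M:ℝ) + 1 ≤ 3 / 2 * M := by linarith
    have h := Real.rpow_le_rpow_of_nonpos (by positivity) h1 hp0.le
    rw [Real.mul_rpow h32.le hMpos.le] at h
    have hMk : ((M:ℝ)) ^ p = (m:ℝ) ^ p * (k:ℝ) ^ p := by
      rw [hMr, Real.mul_rpow hm0.le hk0.le]
    rwa [hMk] at h
  set B : ℝ := (1 - r ^ p) * (3 / 2 : ℝ) ^ p * ((m:ℝ) ^ p * (k:ℝ) ^ p) / (β - 1) with hBdef
  clear_value B
  have hBpos : 0 < B := by
    rw [hBdef]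
    apply div_pos _ hβ1
    have h1 := Real.rpow_pos_of_pos h32 p
    have h2 := Real.rpow_pos_of_pos hm0 p
    have h3 := Real.rpow_pos_of_pos hk0 p
    positivity
  have hDB : B ≤ ∑ i ∈ Icc (M + 1) n, (i : ℝ) ^ (-β) := by
    refine le_trans ?_ (hDval ▸ hDint)
    rw [hBdef]
    have hnum : (1 - r ^ p) * (3 / 2 : ℝ) ^ p * ((m:ℝ) ^ p * (k:ℝ) ^ p) ≤
        ((M:ℝ) + 1) ^ p - ((n:ℝ) + 1) ^ p := by
      have h2 : (1 - r ^ p) * (((3 / 2 : ℝ) ^ p * ((m:ℝ) ^ p * (k:ℝ) ^ p))) ≤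
          (1 - r ^ p) * ((M:ℝ) + 1) ^ p :=
        mul_le_mul_of_nonneg_left hM1p hrpD.le
      have h3 : (1 - r ^ p) * ((M:ℝ) + 1) ^ p
          = ((M:ℝ) + 1) ^ p - r ^ p * ((M:ℝ) + 1) ^ p := by ring
      linarith [h2, hn1p, h3]
    exact (div_le_div_iff_of_pos_right hβ1).2 hnum
  have hDpos : 0 < ∑ i ∈ Icc (M + 1) n, (i : ℝ) ^ (-β) := lt_of_lt_of_le hBpos hDB
  -- Numerator upper bound
  set A : ℝ := β / (β - 1) * (k:ℝ) ^ p with hAdef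
  clear_value A
  have hNA : (∑ i ∈ Icc k n, (i : ℝ) ^ (-β)) ≤ A := by
    have hsplit : (∑ i ∈ Icc k n, (i : ℝ) ^ (-β))
        = (k:ℝ) ^ (-β) + ∑ i ∈ Ico k n, ((i:ℝ) + 1) ^ (-β) := by
      rw [← Finset.Ico_add_one_right_eq_Icc, sum_eq_sum_Ico_succ_bot (by omega) (fun i => (i:ℝ) ^ (-β))]
      congr 1
      rw [Finset.sum_Ico_eq_sum_range, Finset.sum_Ico_eq_sum_range,
        show n + 1 - (k + 1) = n - k by omega]
      refine Finset.sum_congr rfl fun j _ => ?_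
      push_cast
      ring_nf
    have htail : (∑ i ∈ Ico k n, ((i:ℝ) + 1) ^ (-β)) ≤ (k:ℝ) ^ p / (β - 1) := by
      have h := AntitoneOn.sum_le_integral_Ico (f := fun x : ℝ => x ^ (-β))
        (a := k) (b := n) hkn (hf_anti _ _ hk0)
      simp only [Nat.cast_add, Nat.cast_one] at h
      refine le_trans h ?_
      have hn0 : (0:ℝ) < n := lt_of_lt_of_le hk0 (by exact_mod_cast hkn)
      rw [integral_rpow (Or.inr ⟨by linarith,
        Set.notMem_uIcc_of_lt hk0 hn0⟩)]
      rw [show ((n:ℝ) ^ (-β + 1) - (k:ℝ) ^ (-β + 1)) / (-β + 1)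
          = ((k:ℝ) ^ (-β + 1) - (n:ℝ) ^ (-β + 1)) / (β - 1) by
        rw [div_eq_div_iff (by linarith) (ne_of_gt hβ1)]; ring]
      have hnp : 0 ≤ (n:ℝ) ^ (-β + 1) := Real.rpow_nonneg (Nat.cast_nonneg n) _
      rw [hp]
      exact (div_le_div_iff_of_pos_right hβ1).2 (by linarith)
    have hhead : (k:ℝ) ^ (-β) ≤ (k:ℝ) ^ p :=
      Real.rpow_le_rpow_of_exponent_le hk1 (by rw [hp]; linarith)
    rw [hsplit, hAdef]
    have heq : β / (β - 1) * (k:ℝ) ^ p = (k:ℝ) ^ p + (k:ℝ) ^ p / (β - 1) := by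
      field_simp; ring
    rw [heq]
    exact add_le_add hhead htail
  -- combine
  rw [div_le_iff₀ hDpos]
  have hkey : A = C * (m:ℝ) ^ (β - 1) * B := by
    have h32p : (3 / 2 : ℝ) ^ p = ((3 / 2 : ℝ) ^ (β - 1))⁻¹ := by
      rw [hpneg, Real.rpow_neg h32.le]
    have hmp : (m:ℝ) ^ p = ((m:ℝ) ^ (β - 1))⁻¹ := by
      rw [hpneg, Real.rpow_neg hm0.le]
    have h1 : ((3 / 2 : ℝ) ^ (β - 1)) ≠ 0 := ne_of_gt (Real.rpow_pos_of_pos h32 _)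
    have h2 : ((m:ℝ) ^ (β - 1)) ≠ 0 := ne_of_gt (Real.rpow_pos_of_pos hm0 _)
    have h3 : (1 - r ^ p) ≠ 0 := ne_of_gt hrpD
    have h4 : (β - 1) ≠ 0 := ne_of_gt hβ1
    rw [hAdef, hCdef, hBdef, h32p, hmp]
    field_simp
  calc (∑ i ∈ Icc k n, (i : ℝ) ^ (-β)) ≤ A := hNA
    _ = C * (m:ℝ) ^ (β - 1) * B := hkey
    _ ≤ C * (m:ℝ) ^ (β - 1) * ∑ i ∈ Icc (M + 1) n, (i : ℝ) ^ (-β) := by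
        apply mul_le_mul_of_nonneg_left hDB
        positivity
end

section
/- Let 0 < β < 1 and α ∈ (0,1). There exists a constant C > 0 (depending only on β and α) such that for all natural numbers n, m ≥ 1 and k ≥ 1 with mk ≤ αn, the ratio of Zipf tail sums satisfies (Σ_{i=k}^{n} i^{−β}) / (Σ_{i=mk+1}^{n} i^{−β}) ≤ C. -/
open Real Finset

/-- Bernoulli-type step: `(1-β)·(n+1)^{-β} + n^{1-β} ≤ (n+1)^{1-β}`. -/
lemma zipf_step (β : ℝ) (hβ0 : 0 < β) (hβ1 : β < 1) (n : ℕ) :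
    (1 - β) * ((n : ℝ) + 1) ^ (-β) + (n : ℝ) ^ (1 - β) ≤ ((n : ℝ) + 1) ^ (1 - β) := by
  set p : ℝ := 1 - β with hp
  have hp0 : 0 ≤ p := by linarith
  have hp1 : p ≤ 1 := by linarith
  have hn1 : (0 : ℝ) < (n : ℝ) + 1 := by positivity
  have hs : (-1 : ℝ) ≤ -(1 / ((n : ℝ) + 1)) := by
    rw [neg_le_neg_iff]
    rw [div_le_one hn1]
    linarith [Nat.cast_nonneg (α := ℝ) n]
  have hber := rpow_one_add_le_one_add_mul_self hs hp0 hp1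
  have h1 : (1 : ℝ) + -(1 / ((n : ℝ) + 1)) = (n : ℝ) / ((n : ℝ) + 1) := by
    field_simp
    ring
  rw [h1] at hber
  have h2 : ((n : ℝ) / ((n : ℝ) + 1)) ^ p = (n : ℝ) ^ p / ((n : ℝ) + 1) ^ p := by
    rw [Real.div_rpow (Nat.cast_nonneg n) hn1.le]
  rw [h2] at hber
  have hpow : (0 : ℝ) < ((n : ℝ) + 1) ^ p := Real.rpow_pos_of_pos hn1 p
  rw [div_le_iff₀ hpow] at hber
  -- hber : n^p ≤ (1 + p * -(1/(n+1))) * (n+1)^p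
  have h3 : (1 + p * -(1 / ((n : ℝ) + 1))) * ((n : ℝ) + 1) ^ p
      = ((n : ℝ) + 1) ^ p - p * (((n : ℝ) + 1) ^ p / ((n : ℝ) + 1)) := by
    field_simp
    ring
  rw [h3] at hber
  have h4 : ((n : ℝ) + 1) ^ p / ((n : ℝ) + 1) = ((n : ℝ) + 1) ^ (-β) := by
    have hpp : ((n : ℝ) + 1) ^ p = ((n : ℝ) + 1) ^ (-β) * ((n : ℝ) + 1) := by
      rw [show p = -β + 1 by rw [hp]; ring, Real.rpow_add hn1, Real.rpow_one]
    rw [hpp, mul_div_assoc, div_self hn1.ne', mul_one]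
  rw [h4] at hber
  linarith

/-- Sum bound: `∑_{i=1}^n i^{-β} ≤ n^{1-β} / (1-β)`. -/
lemma zipf_sum_le (β : ℝ) (hβ0 : 0 < β) (hβ1 : β < 1) (n : ℕ) :
    ∑ i ∈ Finset.Icc 1 n, (i : ℝ) ^ (-β) ≤ (n : ℝ) ^ (1 - β) / (1 - β) := by
  have h1β : (0 : ℝ) < 1 - β := by linarith
  induction n with
  | zero => simp; positivity
  | succ n ih =>
    rw [Finset.sum_Icc_succ_top (Nat.one_le_iff_ne_zero.mpr (Nat.succ_ne_zero n))]
    have hstep := zipf_step β hβ0 hβ1 n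
    have : ((n + 1 : ℕ) : ℝ) = (n : ℝ) + 1 := by push_cast; ring
    rw [this]
    calc ∑ i ∈ Finset.Icc 1 n, (i : ℝ) ^ (-β) + ((n : ℝ) + 1) ^ (-β)
        ≤ (n : ℝ) ^ (1 - β) / (1 - β) + ((n : ℝ) + 1) ^ (-β) := by linarith
      _ ≤ ((n : ℝ) + 1) ^ (1 - β) / (1 - β) := by
          rw [div_add' _ _ _ h1β.ne', div_le_div_iff_of_pos_right h1β]
          linarith

/-- Zipf tail-sum ratio bound for `0 < β < 1`: there is a constant `C > 0` depending only
on `β` and `α` such that for all `n`, `m ≥ 1`, `k ≥ 1` with `mk ≤ αn`,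
`(∑_{i=k}^n i^{−β}) / (∑_{i=mk+1}^n i^{−β}) ≤ C`. -/
theorem zipf_ratio_beta_lt_one (β α : ℝ) (hβ0 : 0 < β) (hβ1 : β < 1)
    (hα0 : 0 < α) (hα1 : α < 1) :
    ∃ C : ℝ, 0 < C ∧ ∀ n m k : ℕ, 1 ≤ m → 1 ≤ k → (m : ℝ) * k ≤ α * n →
      (∑ i ∈ Finset.Icc k n, (i : ℝ) ^ (-β)) /
          (∑ i ∈ Finset.Icc (m * k + 1) n, (i : ℝ) ^ (-β)) ≤ C := by
  have h1β : (0 : ℝ) < 1 - β := by linarith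
  have h1α : (0 : ℝ) < 1 - α := by linarith
  refine ⟨1 / ((1 - β) * (1 - α)), by positivity, fun n m k hm hk hmk => ?_⟩
  have hmR : (1 : ℝ) ≤ m := by exact_mod_cast hm
  have hkR : (1 : ℝ) ≤ k := by exact_mod_cast hk
  have hn0 : 0 < n := by
    rcases Nat.eq_zero_or_pos n with h | h
    · subst h; simp at hmk; nlinarith
    · exact h
  have hnR : (0 : ℝ) < n := by exact_mod_cast hn0
  have hmkn : m * k < n := by
    by_contra h
    push_neg at h
    have : (n : ℝ) ≤ (m : ℝ) * k := by exact_mod_cast h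
    nlinarith
  -- denominator lower bound
  have hden : (1 - α) * (n : ℝ) ^ (1 - β) ≤
      ∑ i ∈ Finset.Icc (m * k + 1) n, (i : ℝ) ^ (-β) := by
    have hterm : ∀ i ∈ Finset.Icc (m * k + 1) n, (n : ℝ) ^ (-β) ≤ (i : ℝ) ^ (-β) := by
      intro i hi
      rw [Finset.mem_Icc] at hi
      have hi1 : 0 < i := lt_of_lt_of_le (Nat.succ_pos _) hi.1
      exact Real.rpow_le_rpow_of_nonpos (by exact_mod_cast hi1)
        (by exact_mod_cast hi.2) (by linarith)
    have hcard : (Finset.Icc (m * k + 1) n).card = n - m * k := by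
      rw [Nat.card_Icc]; omega
    have h1 : ((n - m * k : ℕ) : ℝ) * (n : ℝ) ^ (-β) ≤
        ∑ i ∈ Finset.Icc (m * k + 1) n, (i : ℝ) ^ (-β) := by
      calc ((n - m * k : ℕ) : ℝ) * (n : ℝ) ^ (-β)
          = ∑ _i ∈ Finset.Icc (m * k + 1) n, (n : ℝ) ^ (-β) := by
            rw [Finset.sum_const, hcard, nsmul_eq_mul]
        _ ≤ _ := Finset.sum_le_sum hterm
    refine le_trans ?_ h1
    have hsub : ((n - m * k : ℕ) : ℝ) = (n : ℝ) - (m : ℝ) * k := by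
      push_cast [Nat.cast_sub hmkn.le]; ring
    rw [hsub]
    have hcast : (1 - α) * (n : ℝ) ≤ (n : ℝ) - (m : ℝ) * k := by nlinarith
    have hrw : (n : ℝ) ^ (1 - β) = (n : ℝ) * (n : ℝ) ^ (-β) := by
      rw [show (1 : ℝ) - β = 1 + -β by ring, Real.rpow_add hnR, Real.rpow_one]
    rw [hrw, ← mul_assoc]
    exact mul_le_mul_of_nonneg_right hcast (Real.rpow_nonneg hnR.le _)
  have hdenpos : 0 < ∑ i ∈ Finset.Icc (m * k + 1) n, (i : ℝ) ^ (-β) :=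
    lt_of_lt_of_le (by positivity) hden
  -- numerator upper bound
  have hnum : ∑ i ∈ Finset.Icc k n, (i : ℝ) ^ (-β) ≤ (n : ℝ) ^ (1 - β) / (1 - β) := by
    refine le_trans (Finset.sum_le_sum_of_subset_of_nonneg
      (Finset.Icc_subset_Icc_left hk) ?_) (zipf_sum_le β hβ0 hβ1 n)
    intro i hi _
    rw [Finset.mem_Icc] at hi
    have : 0 < i := lt_of_lt_of_le Nat.one_pos hi.1
    positivity
  rw [div_le_iff₀ hdenpos]
  calc ∑ i ∈ Finset.Icc k n, (i : ℝ) ^ (-β)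
      ≤ (n : ℝ) ^ (1 - β) / (1 - β) := hnum
    _ = 1 / ((1 - β) * (1 - α)) * ((1 - α) * (n : ℝ) ^ (1 - β)) := by
        field_simp
    _ ≤ _ := by
        apply mul_le_mul_of_nonneg_left hden (by positivity)
end

section
/- Let β > 1. There exist K and N such that for all k ≥ K and all n ≥ N with ⌊k/(log log k)^{1/β}⌋ + 1 ≤ n, setting ℓ = ⌊k/(log log k)^{1/β}⌋ + 1, the normalized Zipf tail satisfies (Σ_{i=ℓ}^{n} i^{−β}) / (Σ_{i=1}^{n} i^{−β}) ≤ (1/0.9) · (log log k)^{1 − 1/β} / k^{β−1}. -/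
/-- Bernoulli's inequality for nonpositive exponents. -/
private lemma bern_nonpos {p t : ℝ} (hp : p ≤ 0) (ht : 0 < t) :
    1 + p * (t - 1) ≤ t ^ p := by
  have h1 : Real.log t ≤ t - 1 := Real.log_le_sub_one_of_pos ht
  have h2 : p * (t - 1) ≤ p * Real.log t := mul_le_mul_of_nonpos_left h1 hp
  have h3 : 1 + p * Real.log t ≤ Real.exp (p * Real.log t) := by
    linarith [Real.add_one_le_exp (p * Real.log t)]
  have h4 : Real.exp (p * Real.log t) = t ^ p := by
    rw [Real.rpow_def_of_pos ht, mul_comm]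
  linarith

/-- Tangent-line inequality for the convex function `x ^ p`, `p ≤ 0`. -/
private lemma tangent_rpow {p x y : ℝ} (hp : p ≤ 0) (hx : 0 < x) (hy : 0 < y) :
    x ^ p + p * (x ^ p / x) * (y - x) ≤ y ^ p := by
  have ht : 0 < y / x := div_pos hy hx
  have hb := bern_nonpos hp ht
  have hxp : 0 < x ^ p := Real.rpow_pos_of_pos hx p
  have key : x ^ p * (1 + p * (y / x - 1)) ≤ x ^ p * ((y / x) ^ p) :=
    mul_le_mul_of_nonneg_left hb hxp.le
  have h2 : x ^ p * ((y / x) ^ p) = y ^ p := by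
    rw [← Real.mul_rpow hx.le ht.le]
    congr 1
    field_simp
  calc x ^ p + p * (x ^ p / x) * (y - x)
      = x ^ p * (1 + p * (y / x - 1)) := by field_simp
    _ ≤ y ^ p := key.trans_eq h2

/-- Telescoping sum over `Icc`. -/
private lemma tel_Icc (g : ℕ → ℝ) {a b : ℕ} (h : a ≤ b + 1) :
    ∑ i ∈ Finset.Icc a b, (g i - g (i + 1)) = g a - g (b + 1) := by
  have : Finset.Icc a b = Finset.Ico a (b + 1) := by
    rw [Finset.Ico_add_one_right_eq_Icc]
  have h2 := Finset.sum_range_sub' (fun i => g (a + i)) (b + 1 - a)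
  simp only [← add_assoc] at h2
  rw [show a + (b + 1 - a) = b + 1 by omega] at h2
  rw [this, Finset.sum_Ico_eq_sum_range, h2, Nat.add_zero]

private lemma term_upper {β : ℝ} (hβ : 1 < β) {i : ℕ} (hi : 1 ≤ i) :
    (i:ℝ) ^ (1 - β) - ((i:ℝ) + 1) ^ (1 - β) ≤ (β - 1) * (i:ℝ) ^ (-β) := by
  have hipos : (0:ℝ) < (i:ℝ) := by exact_mod_cast hi
  have h := tangent_rpow (by linarith : (1:ℝ) - β ≤ 0) hipos
    (by linarith : (0:ℝ) < (i:ℝ) + 1)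
  have hpow : (i:ℝ) ^ (1 - β) / (i:ℝ) = (i:ℝ) ^ (-β) := by
    rw [← Real.rpow_sub_one hipos.ne']; congr 1; ring
  rw [hpow] at h
  nlinarith [h]

private lemma term_lower {β : ℝ} (hβ : 1 < β) {j : ℕ} (hj : 1 ≤ j) :
    (β - 1) * ((j:ℝ) + 1) ^ (-β) ≤ (j:ℝ) ^ (1 - β) - ((j:ℝ) + 1) ^ (1 - β) := by
  have hjpos : (0:ℝ) < (j:ℝ) := by exact_mod_cast hj
  have hj1pos : (0:ℝ) < (j:ℝ) + 1 := by linarith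
  have h := tangent_rpow (by linarith : (1:ℝ) - β ≤ 0) hj1pos hjpos
  have hpow : ((j:ℝ) + 1) ^ (1 - β) / ((j:ℝ) + 1) = ((j:ℝ) + 1) ^ (-β) := by
    rw [← Real.rpow_sub_one hj1pos.ne']; congr 1; ring
  rw [hpow] at h
  nlinarith [h]

/-- Tail-mass estimate in Lemma 4 of the paper: for `β > 1` there exist `K`, `N` such
that for all `k ≥ K`, `n ≥ N` with `ℓ = ⌊k/(log log k)^{1/β}⌋ + 1 ≤ n`, the normalized
Zipf tail satisfies
`(∑_{i=ℓ}^n i^{−β}) / (∑_{i=1}^n i^{−β}) ≤ (1/0.9) · (log log k)^{1−1/β} / k^{β−1}`. -/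
theorem zipf_unpopular_mass (β : ℝ) (hβ : 1 < β) :
    ∃ K N : ℕ, ∀ k n : ℕ, K ≤ k → N ≤ n →
      let ℓ : ℕ := ⌊(k : ℝ) / (Real.log (Real.log k)) ^ (1 / β)⌋₊ + 1
      ℓ ≤ n →
        (∑ i ∈ Finset.Icc ℓ n, (i : ℝ) ^ (-β)) /
            (∑ i ∈ Finset.Icc 1 n, (i : ℝ) ^ (-β)) ≤
          (1 / 0.9) * (Real.log (Real.log k)) ^ (1 - 1 / β) / (k : ℝ) ^ (β - 1) := by
  have hc : (0:ℝ) < β - 1 := by linarith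
  have hp : (1 - β) ≤ 0 := by linarith
  refine ⟨max 16 (⌈(42 * β) ^ 2⌉₊ + 1), ⌈(21:ℝ) ^ (1 / (β - 1))⌉₊, ?_⟩
  intro k n hk hn ℓ hℓn
  have hℓdef : ℓ = ⌊(k : ℝ) / (Real.log (Real.log k)) ^ (1 / β)⌋₊ + 1 := rfl
  set L : ℝ := Real.log (Real.log k) with hLdef
  set x : ℝ := (k : ℝ) / L ^ (1 / β) with hxdef
  -- basic facts about k
  have hk16 : (16:ℕ) ≤ k := le_trans (le_max_left _ _) hk
  have hkr : (16:ℝ) ≤ (k:ℝ) := by exact_mod_cast hk16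
  have hkpos : (0:ℝ) < (k:ℝ) := by linarith
  have hlogk : 1 < Real.log k := by
    rw [Real.lt_log_iff_exp_lt hkpos]
    calc Real.exp 1 < 2.7182818286 := Real.exp_one_lt_d9
      _ ≤ (k:ℝ) := by linarith
  have hL : 0 < L := Real.log_pos hlogk
  have hLb : (0:ℝ) < L ^ (1 / β) := Real.rpow_pos_of_pos hL _
  have hx : 0 < x := div_pos hkpos hLb
  -- ℓ ≥ x
  have hxℓ : x ≤ (ℓ:ℝ) := by
    have := Nat.lt_floor_add_one x
    rw [hℓdef]
    push_cast
    linarith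
  have hℓpos : (0:ℝ) < (ℓ:ℝ) := lt_of_lt_of_le hx hxℓ
  -- L ^ (1/β) ≤ 2 √k
  have hsk : (0:ℝ) ≤ (k:ℝ) := hkpos.le
  have hsq : Real.sqrt k * Real.sqrt k = (k:ℝ) := Real.mul_self_sqrt hsk
  have hskpos : 0 < Real.sqrt k := Real.sqrt_pos.mpr hkpos
  have hsk4 : (4:ℝ) ≤ Real.sqrt k := by
    rw [show (4:ℝ) = Real.sqrt 16 by
      rw [show (16:ℝ) = 4^2 by norm_num, Real.sqrt_sq]; norm_num]
    exact Real.sqrt_le_sqrt hkr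
  have hLsqrt : L ^ (1 / β) ≤ 2 * Real.sqrt k := by
    have hlogle : Real.log k ≤ 2 * Real.sqrt k := by
      have h1 : Real.log (Real.sqrt k) ≤ Real.sqrt k - 1 :=
        Real.log_le_sub_one_of_pos hskpos
      have h2 : Real.log (Real.sqrt k) = Real.log k / 2 := Real.log_sqrt hsk
      linarith
    rcases le_or_gt L 1 with h1 | h1
    · calc L ^ (1 / β) ≤ 1 ^ (1 / β) := by
            apply Real.rpow_le_rpow hL.le h1 (by positivity)
        _ = 1 := Real.one_rpow _
        _ ≤ 2 * Real.sqrt k := by linarith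
    · calc L ^ (1 / β) ≤ L ^ (1:ℝ) := by
            apply Real.rpow_le_rpow_of_exponent_le h1.le
            rw [div_le_one (by linarith)]; linarith
        _ = L := Real.rpow_one L
        _ ≤ Real.log k - 1 := Real.log_le_sub_one_of_pos (by linarith)
        _ ≤ 2 * Real.sqrt k := by linarith
  -- x ≥ √k / 2 ≥ 21 β
  have hsk42 : 42 * β ≤ Real.sqrt k := by
    have hkk : ((42 * β) ^ 2 : ℝ) ≤ (k:ℝ) := by
      have h1 : (⌈(42 * β) ^ 2⌉₊ + 1 : ℕ) ≤ k := le_trans (le_max_right _ _) hk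
      have h2 : ((42 * β) ^ 2 : ℝ) ≤ (⌈(42 * β) ^ 2⌉₊ : ℝ) := Nat.le_ceil _
      have h3 : ((⌈(42 * β) ^ 2⌉₊ : ℕ) : ℝ) ≤ (k:ℝ) := by exact_mod_cast le_trans (Nat.le_succ _) h1
      linarith
    exact (Real.le_sqrt' (by linarith)).mpr hkk
  have hxge : Real.sqrt k / 2 ≤ x := by
    have h1 : (k:ℝ) / (2 * Real.sqrt k) ≤ x :=
      div_le_div_of_nonneg_left hsk hLb hLsqrt
    have h2 : (k:ℝ) / (2 * Real.sqrt k) = Real.sqrt k / 2 := by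
      rw [div_eq_div_iff (by positivity) (by norm_num)]; linear_combination (-2) * hsq
    linarith
  have hℓ21 : 21 * (β - 1) ≤ (ℓ:ℝ) := by
    linarith only [hsk42, hxge, hxℓ, hβ]
  -- bound on (n+1)^(1-β)
  have hn1pos : (0:ℝ) < (n:ℝ) + 1 := by positivity
  have hn21 : ((n:ℝ) + 1) ^ (1 - β) ≤ 1 / 21 := by
    have hNle : (21:ℝ) ^ (1 / (β - 1)) ≤ (n:ℝ) + 1 := by
      have h1 : (21:ℝ) ^ (1 / (β - 1)) ≤ (⌈(21:ℝ) ^ (1 / (β - 1))⌉₊ : ℝ) := Nat.le_ceil _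
      have h2 : ((⌈(21:ℝ) ^ (1 / (β - 1))⌉₊ : ℕ) : ℝ) ≤ (n:ℝ) := by exact_mod_cast hn
      linarith
    have h21 : (0:ℝ) ≤ (21:ℝ) ^ (1 / (β - 1)) := (Real.rpow_pos_of_pos (by norm_num) _).le
    have h3 : (21:ℝ) ≤ ((n:ℝ) + 1) ^ (β - 1) := by
      calc (21:ℝ) = ((21:ℝ) ^ (1 / (β - 1))) ^ (β - 1) := by
            rw [← Real.rpow_mul (by norm_num : (0:ℝ) ≤ 21)]
            rw [one_div_mul_cancel hc.ne', Real.rpow_one]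
        _ ≤ ((n:ℝ) + 1) ^ (β - 1) := Real.rpow_le_rpow h21 hNle hc.le
    have h4 : ((n:ℝ) + 1) ^ (1 - β) = (((n:ℝ) + 1) ^ (β - 1))⁻¹ := by
      rw [show (1:ℝ) - β = -(β - 1) by ring, Real.rpow_neg hn1pos.le]
    rw [h4, one_div]
    exact inv_anti₀ (by norm_num) h3
  -- denominator lower bound
  have hden : (1 - ((n:ℝ) + 1) ^ (1 - β)) / (β - 1) ≤
      ∑ i ∈ Finset.Icc 1 n, (i : ℝ) ^ (-β) := by
    have htel : ∑ i ∈ Finset.Icc 1 n, (((i:ℕ):ℝ) ^ (1 - β) - (((i:ℕ) + 1 : ℕ):ℝ) ^ (1 - β))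
        = (1:ℝ) - ((n:ℝ) + 1) ^ (1 - β) := by
      rw [tel_Icc (fun i => ((i:ℕ):ℝ) ^ (1 - β)) (by omega)]
      push_cast
      rw [Real.one_rpow]
    have hterm : ∀ i ∈ Finset.Icc 1 n,
        ((i:ℝ) ^ (1 - β) - ((i:ℝ) + 1) ^ (1 - β)) ≤ (β - 1) * (i:ℝ) ^ (-β) := by
      intro i hi
      simp only [Finset.mem_Icc] at hi
      exact term_upper hβ hi.1
    have hsum : (1:ℝ) - ((n:ℝ) + 1) ^ (1 - β) ≤
        (β - 1) * ∑ i ∈ Finset.Icc 1 n, (i : ℝ) ^ (-β) := by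
      rw [← htel, Finset.mul_sum]
      apply Finset.sum_le_sum
      intro i hi
      have := hterm i hi
      push_cast at this ⊢
      linarith only [this]
    rw [div_le_iff₀ hc]
    linarith [hsum]
  have hden2 : (20/21 : ℝ) / (β - 1) ≤ ∑ i ∈ Finset.Icc 1 n, (i : ℝ) ^ (-β) := by
    have h1 : (20/21 : ℝ) / (β - 1) ≤ (1 - ((n:ℝ) + 1) ^ (1 - β)) / (β - 1) :=
      div_le_div₀ (by linarith) (by linarith) hc le_rfl
    linarith
  -- numerator upper bound
  have hn1 : 1 ≤ n := le_trans (by omega) hℓn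
  have hnum : ∑ i ∈ Finset.Icc ℓ n, (i : ℝ) ^ (-β) ≤
      (ℓ:ℝ) ^ (-β) + (ℓ:ℝ) ^ (1 - β) / (β - 1) := by
    rw [Finset.Icc_eq_cons_Ioc hℓn, Finset.sum_cons]
    have hmap : Finset.Ioc ℓ n = Finset.map (addRightEmbedding 1) (Finset.Icc ℓ (n - 1)) := by
      rw [Finset.map_add_right_Icc]
      rw [show (n - 1) + 1 = n by omega, ← Finset.Icc_add_one_left_eq_Ioc]
    have htail : ∑ i ∈ Finset.Ioc ℓ n, (i : ℝ) ^ (-β) ≤ (ℓ:ℝ) ^ (1 - β) / (β - 1) := by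
      rw [hmap, Finset.sum_map]
      simp only [addRightEmbedding_apply]
      have hterm : ∀ j ∈ Finset.Icc ℓ (n-1),
          ((j + 1 : ℕ) : ℝ) ^ (-β) ≤
            (((j:ℕ):ℝ) ^ (1 - β) - (((j:ℕ) + 1 : ℕ):ℝ) ^ (1 - β)) / (β - 1) := by
        intro j hj
        simp only [Finset.mem_Icc] at hj
        have hj1 : 1 ≤ j := le_trans (by omega) hj.1
        have := term_lower hβ hj1
        rw [le_div_iff₀ hc]
        push_cast
        linarith only [this]
      calc ∑ j ∈ Finset.Icc ℓ (n-1), ((j + 1 : ℕ) : ℝ) ^ (-β)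
          ≤ ∑ j ∈ Finset.Icc ℓ (n-1),
              ((((j:ℕ)):ℝ) ^ (1 - β) - (((j:ℕ) + 1 : ℕ):ℝ) ^ (1 - β)) / (β - 1) :=
            Finset.sum_le_sum hterm
        _ = (∑ j ∈ Finset.Icc ℓ (n-1),
              ((((j:ℕ)):ℝ) ^ (1 - β) - (((j:ℕ) + 1 : ℕ):ℝ) ^ (1 - β))) / (β - 1) := by
            rw [Finset.sum_div]
        _ = ((ℓ:ℝ) ^ (1 - β) - ((n - 1 + 1 : ℕ):ℝ) ^ (1 - β)) / (β - 1) := by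
            rw [tel_Icc (fun i => ((i:ℕ):ℝ) ^ (1 - β)) (by omega)]
        _ ≤ (ℓ:ℝ) ^ (1 - β) / (β - 1) := by
            have hnn0 : (0:ℝ) ≤ ((n - 1 + 1 : ℕ):ℝ) ^ (1 - β) := Real.rpow_nonneg (by positivity) _
            have hnn1 : (0:ℝ) ≤ (ℓ:ℝ) ^ (1 - β) := Real.rpow_nonneg hℓpos.le _
            exact div_le_div₀ hnn1 (by linarith) hc le_rfl
    linarith
  -- combine
  have hnum2 : (ℓ:ℝ) ^ (-β) + (ℓ:ℝ) ^ (1 - β) / (β - 1) ≤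
      (22 / 21) * (ℓ:ℝ) ^ (1 - β) / (β - 1) := by
    have hpow : (ℓ:ℝ) ^ (-β) = (ℓ:ℝ) ^ (1 - β) / (ℓ:ℝ) := by
      rw [← Real.rpow_sub_one hℓpos.ne']; congr 1; ring
    have hnn : (0:ℝ) ≤ (ℓ:ℝ) ^ (1 - β) := Real.rpow_nonneg hℓpos.le _
    have h1 : (ℓ:ℝ) ^ (1 - β) / (ℓ:ℝ) ≤ (ℓ:ℝ) ^ (1 - β) / (21 * (β - 1)) :=
      div_le_div_of_nonneg_left hnn (by positivity) hℓ21
    rw [hpow]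
    have : (ℓ:ℝ) ^ (1 - β) / (21 * (β - 1)) + (ℓ:ℝ) ^ (1 - β) / (β - 1)
        = (22 / 21) * (ℓ:ℝ) ^ (1 - β) / (β - 1) := by
      field_simp; ring
    linarith
  have hnumnn : (0:ℝ) ≤ (ℓ:ℝ) ^ (-β) + (ℓ:ℝ) ^ (1 - β) / (β - 1) := by
    have h1 : (0:ℝ) ≤ (ℓ:ℝ) ^ (-β) := Real.rpow_nonneg hℓpos.le _
    have h2 : (0:ℝ) ≤ (ℓ:ℝ) ^ (1 - β) := Real.rpow_nonneg hℓpos.le _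
    positivity
  have hratio : (∑ i ∈ Finset.Icc ℓ n, (i : ℝ) ^ (-β)) /
      (∑ i ∈ Finset.Icc 1 n, (i : ℝ) ^ (-β)) ≤
      ((22 / 21) * (ℓ:ℝ) ^ (1 - β) / (β - 1)) / ((20/21 : ℝ) / (β - 1)) := by
    apply div_le_div₀ (by positivity) (le_trans hnum hnum2) (by positivity) hden2
  have hsimp : ((22 / 21) * (ℓ:ℝ) ^ (1 - β) / (β - 1)) / ((20/21 : ℝ) / (β - 1))
      = (11 / 10) * (ℓ:ℝ) ^ (1 - β) := by
    field_simp; ring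
  -- ℓ^(1-β) ≤ x^(1-β) = L^(1-1/β) / k^(β-1)
  have hℓx2 : (ℓ:ℝ) ^ (1 - β) ≤ x ^ (1 - β) :=
    Real.rpow_le_rpow_of_nonpos hx hxℓ hp
  have hxval : x ^ (1 - β) = L ^ (1 - 1/β) / (k:ℝ) ^ (β - 1) := by
    have h1 : x ^ (1 - β) = (k:ℝ) ^ (1 - β) / (L ^ (1/β)) ^ (1 - β) :=
      Real.div_rpow hkpos.le hLb.le _
    have h2 : (L ^ (1/β)) ^ (1 - β) = L ^ ((1/β) * (1 - β)) := (Real.rpow_mul hL.le _ _).symm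
    have h3 : (1/β) * (1 - β) = -(1 - 1/β) := by
      field_simp
      ring
    have h4 : L ^ (-(1 - 1/β)) = (L ^ (1 - 1/β))⁻¹ := Real.rpow_neg hL.le _
    have h5 : (k:ℝ) ^ (1 - β) = ((k:ℝ) ^ (β - 1))⁻¹ := by
      rw [show (1:ℝ) - β = -(β - 1) by ring, Real.rpow_neg hkpos.le]
    have hLp : (0:ℝ) < L ^ (1 - 1/β) := Real.rpow_pos_of_pos hL _
    have hkp : (0:ℝ) < (k:ℝ) ^ (β - 1) := Real.rpow_pos_of_pos hkpos _
    rw [h1, h2, h3, h4, h5]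
    field_simp
  calc (∑ i ∈ Finset.Icc ℓ n, (i : ℝ) ^ (-β)) /
        (∑ i ∈ Finset.Icc 1 n, (i : ℝ) ^ (-β))
      ≤ ((22 / 21) * (ℓ:ℝ) ^ (1 - β) / (β - 1)) / ((20/21 : ℝ) / (β - 1)) := hratio
    _ = (11 / 10) * (ℓ:ℝ) ^ (1 - β) := hsimp
    _ ≤ (11 / 10) * x ^ (1 - β) := by
        exact mul_le_mul_of_nonneg_left hℓx2 (by norm_num)
    _ = (11 / 10) * (L ^ (1 - 1/β) / (k:ℝ) ^ (β - 1)) := by rw [hxval]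
    _ ≤ (1 / 0.9) * L ^ (1 - 1/β) / (k:ℝ) ^ (β - 1) := by
        have hnn : (0:ℝ) ≤ L ^ (1 - 1/β) / (k:ℝ) ^ (β - 1) := by
          have hLp : (0:ℝ) < L ^ (1 - 1/β) := Real.rpow_pos_of_pos hL _
          have hkp : (0:ℝ) < (k:ℝ) ^ (β - 1) := Real.rpow_pos_of_pos hkpos _
          positivity
        rw [mul_div_assoc]
        exact mul_le_mul_of_nonneg_right (by norm_num) hnn
end

section
/- Let β > 1. There exist c > 0, K and N₀ such that the following holds for all k ≥ K and all n ≥ N₀ with ⌊k/(log log k)^{1/β}⌋ + 1 ≤ n. Let p be the Zipf(β, n) probability mass function on {1,…,n} (p_i = i^{−β}/Σ_{j=1}^n j^{−β}), let N = ⌊k^{β}/log log k⌋, let ℓ = ⌊k/(log log k)^{1/β}⌋ + 1, and let X_1, …, X_N be i.i.d. random variables each with law p (i.e., consider the N-fold product of the measure induced by p). Then the probability that the number of indices t ∈ {1,…,N} with X_t ≥ ℓ exceeds (2/0.9) · k/(log log k)^{1/β} is at most exp(−c · k/(log log k)^{1/β}). -/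
open MeasureTheory

/-- The Zipf(β, n) probability of content `i`: `i^{−β}/∑_{j=1}^n j^{−β}` for
`i ∈ {1,…,n}` and `0` otherwise. -/
noncomputable def zipfP (β : ℝ) (n : ℕ) (i : ℕ) : ℝ :=
  if i ∈ Finset.Icc 1 n then
    (i : ℝ) ^ (-β) / (∑ j ∈ Finset.Icc 1 n, (j : ℝ) ^ (-β)) else 0

/-- The measure on `ℕ` induced by the Zipf(β, n) probability mass function. -/
noncomputable def zipfMeasure (β : ℝ) (n : ℕ) : Measure ℕ :=
  Measure.sum fun i => ENNReal.ofReal (zipfP β n i) • Measure.dirac i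


open Real Finset

variable {β : ℝ}

lemma tangentA (hβ : 1 < β) {x : ℝ} (hx : 1 ≤ x) :
    x ^ (1 - β) - (β - 1) * x ^ (-β) ≤ (x + 1) ^ (1 - β) := by
  have hx0 : (0:ℝ) < x := lt_of_lt_of_le one_pos hx
  have hx1 : (0:ℝ) < x + 1 := by linarith
  have hxb : (0:ℝ) < x ^ β := rpow_pos_of_pos hx0 β
  have hx1b : (0:ℝ) < (x + 1) ^ β := rpow_pos_of_pos hx1 β
  have hs : (-1:ℝ) ≤ -1 / (x + 1) := by
    rw [neg_div]
    have : 1 / (x + 1) ≤ 1 := by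
      rw [div_le_one hx1]; linarith
    linarith
  have hb := one_add_mul_self_le_rpow_one_add hs hβ.le
  have h1 : (1:ℝ) + -1 / (x + 1) = x / (x + 1) := by field_simp; ring
  rw [h1, Real.div_rpow hx0.le hx1.le] at hb
  have hb' : (x + 1 - β) * (x + 1) ^ β ≤ x ^ β * (x + 1) := by
    have h2 : (1:ℝ) + β * (-1 / (x + 1)) = (x + 1 - β) / (x + 1) := by field_simp; ring
    rw [h2, div_le_div_iff₀ hx1 hx1b] at hb
    linarith
  rw [Real.rpow_sub hx0, Real.rpow_sub hx1, Real.rpow_one, Real.rpow_one,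
    Real.rpow_neg hx0.le, ← div_eq_mul_inv, div_sub_div_same, div_le_div_iff₀ hxb hx1b]
  nlinarith

lemma tangentB (hβ : 1 < β) {x : ℝ} (hx : 2 ≤ x) :
    x ^ (1 - β) + (β - 1) * x ^ (-β) ≤ (x - 1) ^ (1 - β) := by
  have hx0 : (0:ℝ) < x := by linarith
  have hx1 : (0:ℝ) < x - 1 := by linarith
  have hxb : (0:ℝ) < x ^ β := rpow_pos_of_pos hx0 β
  have hx1b : (0:ℝ) < (x - 1) ^ β := rpow_pos_of_pos hx1 β
  have hs : (-1:ℝ) ≤ 1 / (x - 1) := by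
    have : (0:ℝ) ≤ 1 / (x - 1) := by positivity
    linarith
  have hb := one_add_mul_self_le_rpow_one_add hs hβ.le
  have h1 : (1:ℝ) + 1 / (x - 1) = x / (x - 1) := by field_simp; ring
  rw [h1, Real.div_rpow hx0.le hx1.le] at hb
  have hb' : (x - 1 + β) * (x - 1) ^ β ≤ x ^ β * (x - 1) := by
    have h2 : (1:ℝ) + β * (1 / (x - 1)) = (x - 1 + β) / (x - 1) := by field_simp
    rw [h2, div_le_div_iff₀ hx1 hx1b] at hb
    linarith
  rw [Real.rpow_sub hx0, Real.rpow_sub hx1, Real.rpow_one, Real.rpow_one,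
    Real.rpow_neg hx0.le, ← div_eq_mul_inv, ← add_div, div_le_div_iff₀ hxb hx1b]
  nlinarith

lemma Zlower (hβ : 1 < β) (n : ℕ) :
    (1 - ((n:ℝ) + 1) ^ (1 - β)) / (β - 1) ≤ ∑ j ∈ Icc 1 n, (j : ℝ) ^ (-β) := by
  have hb1 : (0:ℝ) < β - 1 := by linarith
  induction n with
  | zero => simp
  | succ n ih =>
    rw [Finset.sum_Icc_succ_top (Nat.one_le_iff_ne_zero.mpr (Nat.succ_ne_zero n))]
    have hA := tangentA hβ (x := (n:ℝ) + 1)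
      (by have := Nat.cast_nonneg (α := ℝ) n; linarith)
    rw [div_le_iff₀ hb1] at ih ⊢
    push_cast
    linarith [ih, hA]

lemma tail_aux (hβ : 1 < β) (l : ℕ) (hl : 2 ≤ l) :
    ∀ n, l - 1 ≤ n →
      (∑ i ∈ Icc l n, (i : ℝ) ^ (-β)) + (n : ℝ) ^ (1 - β) / (β - 1)
        ≤ ((l - 1 : ℕ) : ℝ) ^ (1 - β) / (β - 1) := by
  have hb1 : (0:ℝ) < β - 1 := by linarith
  refine Nat.le_induction ?_ ?_
  · rw [Finset.Icc_eq_empty (by omega), Finset.sum_empty, zero_add]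
  · intro n hn ih
    rw [Finset.sum_Icc_succ_top (by omega)]
    have h2 : (2:ℝ) ≤ (n:ℝ) + 1 := by
      have : 1 ≤ n := by omega
      have : (1:ℝ) ≤ (n:ℝ) := by exact_mod_cast this
      linarith
    have hB := tangentB hβ h2
    have hn1 : ((n:ℝ) + 1 - 1) = (n:ℝ) := by ring
    rw [hn1] at hB
    have hB' := (div_le_div_iff_of_pos_right hb1).mpr hB
    rw [add_div, mul_div_assoc, mul_div_cancel₀ _ hb1.ne'] at hB'
    push_cast
    linarith [ih, hB']

lemma tail_upper (hβ : 1 < β) (l n : ℕ) (hl : 2 ≤ l) :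
    ∑ i ∈ Icc l n, (i : ℝ) ^ (-β) ≤ ((l - 1 : ℕ) : ℝ) ^ (1 - β) / (β - 1) := by
  have hb1 : (0:ℝ) < β - 1 := by linarith
  rcases lt_or_ge n l with h | h
  · rw [Finset.Icc_eq_empty (by omega), Finset.sum_empty]
    positivity
  · have := tail_aux hβ l hl n (by omega)
    have hn : (0:ℝ) ≤ (n : ℝ) ^ (1 - β) / (β - 1) := by positivity
    linarith


lemma zipfP_nonneg (β : ℝ) (n i : ℕ) : 0 ≤ zipfP β n i := by
  unfold zipfP
  split
  · apply div_nonneg (by positivity)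
    exact Finset.sum_nonneg fun j _ => by positivity
  · exact le_refl _

lemma Zpos (β : ℝ) {n : ℕ} (hn : 1 ≤ n) : 0 < ∑ j ∈ Finset.Icc 1 n, (j : ℝ) ^ (-β) := by
  apply Finset.sum_pos' (fun j hj => by positivity)
  refine ⟨1, Finset.mem_Icc.mpr ⟨le_refl 1, hn⟩, by norm_num⟩

lemma sum_zipfP (β : ℝ) {n : ℕ} (hn : 1 ≤ n) : ∑ i ∈ Finset.Icc 1 n, zipfP β n i = 1 := by
  unfold zipfP
  rw [Finset.sum_congr rfl fun i hi => if_pos hi, ← Finset.sum_div]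
  exact div_self (Zpos β hn).ne'

open MeasureTheory in
lemma zipfMeasure_singleton (β : ℝ) (n a : ℕ) :
    zipfMeasure β n {a} = ENNReal.ofReal (zipfP β n a) := by
  unfold zipfMeasure
  rw [Measure.sum_apply _ (measurableSet_singleton a)]
  rw [tsum_eq_single a ?_]
  · simp [Measure.dirac_apply_of_mem]
  · intro b hb
    simp [Measure.smul_apply, Measure.dirac_apply' _ (measurableSet_singleton a),
      Set.indicator_of_notMem (by simpa using hb : b ∉ ({a} : Set ℕ)), Pi.single_apply, hb]

open MeasureTheory in
lemma zipf_isProb (β : ℝ) {n : ℕ} (hn : 1 ≤ n) : IsProbabilityMeasure (zipfMeasure β n) := by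
  constructor
  unfold zipfMeasure
  rw [Measure.sum_apply _ MeasurableSet.univ]
  simp only [Measure.smul_apply, Measure.dirac_apply_of_mem (Set.mem_univ _), smul_eq_mul, mul_one]
  rw [tsum_eq_sum (s := Finset.Icc 1 n) ?_]
  · rw [← ENNReal.ofReal_sum_of_nonneg fun i _ => zipfP_nonneg β n i, sum_zipfP β hn,
      ENNReal.ofReal_one]
  · intro b hb
    rw [zipfP, if_neg hb, ENNReal.ofReal_zero]

open MeasureTheory in
lemma zipf_integrable {β : ℝ} {n : ℕ} (hn : 1 ≤ n) (g : ℕ → ℝ) (C : ℝ)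
    (hC : ∀ i, |g i| ≤ C) : Integrable g (zipfMeasure β n) := by
  haveI := zipf_isProb β hn
  exact (integrable_const C).mono' Measurable.of_discrete.aestronglyMeasurable
    (ae_of_all _ fun i => by simpa using hC i)

open MeasureTheory in
lemma zipf_integral {β : ℝ} {n : ℕ} (hn : 1 ≤ n) (g : ℕ → ℝ) (C : ℝ) (hC : ∀ i, |g i| ≤ C) :
    ∫ x, g x ∂(zipfMeasure β n) = ∑ i ∈ Finset.Icc 1 n, zipfP β n i * g i := by
  rw [integral_countable' (zipf_integrable hn g C hC)]
  rw [tsum_eq_sum (s := Finset.Icc 1 n) ?_]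
  · exact Finset.sum_congr rfl fun i _ => by
      rw [measureReal_def, zipfMeasure_singleton, ENNReal.toReal_ofReal (zipfP_nonneg β n i), smul_eq_mul]
  · intro b hb
    rw [measureReal_def, zipfMeasure_singleton, zipfP, if_neg hb]
    simp

open MeasureTheory in
lemma chernoff_core (β : ℝ) {n ℓ : ℕ} (N : ℕ) (hn : 1 ≤ n) (hℓ : 1 ≤ ℓ) (hℓn : ℓ ≤ n)
    (a : ℝ) (ha : 0 ≤ a) :
    Measure.pi (fun _ : Fin N => zipfMeasure β n)
      {x | a < ((Finset.univ.filter fun t : Fin N => ℓ ≤ x t).card : ℝ)} ≤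
    ENNReal.ofReal (Real.exp ((N : ℝ) * (∑ i ∈ Finset.Icc ℓ n, zipfP β n i) *
      (Real.exp 2⁻¹ - 1) - 2⁻¹ * a)) := by
  classical
  haveI hP : IsProbabilityMeasure (zipfMeasure β n) := zipf_isProb β hn
  letI : MeasureSpace ℕ := ⟨zipfMeasure β n⟩
  haveI : IsProbabilityMeasure (volume : Measure ℕ) := hP
  set q : ℝ := ∑ i ∈ Finset.Icc ℓ n, zipfP β n i with hq
  have hq0 : 0 ≤ q := Finset.sum_nonneg fun i _ => zipfP_nonneg β n i
  have he1 : (1:ℝ) ≤ Real.exp 2⁻¹ := by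
    rw [← Real.exp_zero]; exact Real.exp_le_exp.mpr (by norm_num)
  set g : ℕ → ℝ := fun i => if ℓ ≤ i then Real.exp 2⁻¹ else 1 with hgdef
  have hg1 : ∀ i, 1 ≤ g i := fun i => by
    simp only [hgdef]; split <;> simp [he1]
  have hgC : ∀ i, |g i| ≤ Real.exp 2⁻¹ := fun i => by
    rw [abs_of_nonneg (le_trans zero_le_one (hg1 i))]
    simp only [hgdef]; split <;> simp [he1]
  -- expectation of g
  have hE : ∫ x, g x ∂(zipfMeasure β n) = 1 + (Real.exp 2⁻¹ - 1) * q := by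
    rw [zipf_integral hn g _ hgC]
    have : ∀ i ∈ Finset.Icc 1 n, zipfP β n i * g i
        = zipfP β n i + (Real.exp 2⁻¹ - 1) * (if ℓ ≤ i then zipfP β n i else 0) := by
      intro i _
      simp only [hgdef]; split <;> ring
    rw [Finset.sum_congr rfl this, Finset.sum_add_distrib, sum_zipfP β hn,
      ← Finset.mul_sum, Finset.sum_ite, Finset.sum_const_zero, add_zero]
    have hfilter : (Finset.Icc 1 n).filter (fun i => ℓ ≤ i) = Finset.Icc ℓ n := by
      ext i
      simp only [Finset.mem_filter, Finset.mem_Icc]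
      omega
    rw [hfilter]
  set E : ℝ := 1 + (Real.exp 2⁻¹ - 1) * q with hEdef
  have hE0 : 0 ≤ E := by rw [hEdef]; nlinarith [mul_nonneg (sub_nonneg.mpr he1) hq0]
  set f : (Fin N → ℕ) → ℝ := fun x => ∏ i, g (x i) with hfdef
  have hvol : (volume : Measure (Fin N → ℕ)) = Measure.pi fun _ : Fin N => zipfMeasure β n :=
    volume_pi
  have hf_int : Integrable f (Measure.pi fun _ : Fin N => zipfMeasure β n) := by
    rw [← hvol]
    exact Integrable.fintype_prod (f := fun _ : Fin N => g)
      (fun _ => zipf_integrable hn g _ hgC)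
  have hf_exp : ∫ x, f x ∂(Measure.pi fun _ : Fin N => zipfMeasure β n) = E ^ N := by
    rw [← hvol]
    rw [show (∫ x : Fin N → ℕ, f x) = ∫ x : Fin N → ℕ, ∏ i, g (x i) from rfl,
      volume_pi, integral_fintype_prod_eq_pow (ι := Fin N) g, Fintype.card_fin]
    rw [show (∫ x, g x) = ∫ x, g x ∂(volume : Measure ℕ) from rfl]
    rw [show (volume : Measure ℕ) = zipfMeasure β n from rfl, hE]
  -- pointwise: f x = exp (2⁻¹ * count)
  have hf_eq : ∀ x : Fin N → ℕ,
      f x = Real.exp (2⁻¹ * ((Finset.univ.filter fun t : Fin N => ℓ ≤ x t).card : ℝ)) := by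
    intro x
    have : ∀ i : Fin N, g (x i) = Real.exp (if ℓ ≤ x i then 2⁻¹ else 0) := by
      intro i
      simp only [hgdef]
      split <;> simp
    rw [hfdef]
    simp only [this]
    rw [← Real.exp_sum]
    congr 1
    rw [Finset.sum_ite, Finset.sum_const_zero, add_zero, Finset.sum_const, nsmul_eq_mul]
    ring
  set ε : ℝ := Real.exp (2⁻¹ * a) with hεdef
  have hε0 : 0 < ε := Real.exp_pos _
  have hsub : {x : Fin N → ℕ | a < ((Finset.univ.filter fun t : Fin N => ℓ ≤ x t).card : ℝ)}
      ⊆ {x | ε ≤ f x} := by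
    intro x hx
    rw [Set.mem_setOf_eq] at hx ⊢
    rw [hf_eq x, hεdef]
    exact Real.exp_le_exp.mpr (by nlinarith)
  have hf_nonneg : 0 ≤ᵐ[Measure.pi fun _ : Fin N => zipfMeasure β n] f :=
    ae_of_all _ fun x => by
      show (0:ℝ) ≤ ∏ i, g (x i)
      exact Finset.prod_nonneg fun i _ => le_trans zero_le_one (hg1 (x i))
  have hM := mul_meas_ge_le_integral_of_nonneg hf_nonneg hf_int ε
  rw [hf_exp] at hM
  haveI : IsProbabilityMeasure (Measure.pi fun _ : Fin N => zipfMeasure β n) :=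
    Measure.pi.instIsProbabilityMeasure _
  calc Measure.pi (fun _ : Fin N => zipfMeasure β n)
        {x | a < ((Finset.univ.filter fun t : Fin N => ℓ ≤ x t).card : ℝ)}
      ≤ Measure.pi (fun _ : Fin N => zipfMeasure β n) {x | ε ≤ f x} := measure_mono hsub
    _ = ENNReal.ofReal ((Measure.pi (fun _ : Fin N => zipfMeasure β n) {x | ε ≤ f x}).toReal) :=
        (ENNReal.ofReal_toReal (measure_ne_top _ _)).symm
    _ ≤ ENNReal.ofReal (Real.exp ((N : ℝ) * q * (Real.exp 2⁻¹ - 1) - 2⁻¹ * a)) := by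
        apply ENNReal.ofReal_le_ofReal
        have h1 : (Measure.pi (fun _ : Fin N => zipfMeasure β n) {x | ε ≤ f x}).toReal
            ≤ E ^ N / ε := by
          rw [le_div_iff₀ hε0]
          rw [measureReal_def] at hM
          linarith [hM]
        refine h1.trans ?_
        have h2 : E ^ N ≤ Real.exp ((N : ℝ) * (q * (Real.exp 2⁻¹ - 1))) := by
          rw [Real.exp_nat_mul]
          apply pow_le_pow_left₀ hE0
          calc E = q * (Real.exp 2⁻¹ - 1) + 1 := by rw [hEdef]; ring
            _ ≤ Real.exp (q * (Real.exp 2⁻¹ - 1)) := Real.add_one_le_exp _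
        calc E ^ N / ε ≤ Real.exp ((N : ℝ) * (q * (Real.exp 2⁻¹ - 1))) / ε := by
              gcongr
          _ = Real.exp ((N : ℝ) * q * (Real.exp 2⁻¹ - 1) - 2⁻¹ * a) := by
              rw [hεdef, ← Real.exp_sub]
              ring_nf


set_option maxHeartbeats 1000000 in
/-- Lemma 4 of the paper (event `E₁`): for `β > 1` there are `c > 0`, `K`, `N₀` such that
for `k ≥ K`, `n ≥ N₀` with `ℓ = ⌊k/(log log k)^{1/β}⌋ + 1 ≤ n`, in
`N = ⌊k^β/log log k⌋` i.i.d. Zipf(β, n) requests (the `N`-fold product measure), the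
probability that more than `(2/0.9)·k/(log log k)^{1/β}` of the requests are for the
unpopular contents `{ℓ, …, n}` is at most `exp(−c·k/(log log k)^{1/β})`. -/
theorem zipf_unpopular_requests_chernoff (β : ℝ) (hβ : 1 < β) :
    ∃ c : ℝ, 0 < c ∧ ∃ K N₀ : ℕ, ∀ k n : ℕ, K ≤ k → N₀ ≤ n →
      let ℓ : ℕ := ⌊(k : ℝ) / (Real.log (Real.log k)) ^ (1 / β)⌋₊ + 1
      let N : ℕ := ⌊(k : ℝ) ^ β / Real.log (Real.log k)⌋₊
      ℓ ≤ n →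
        Measure.pi (fun _ : Fin N => zipfMeasure β n)
            {x | (2 / 0.9) * (k : ℝ) / (Real.log (Real.log k)) ^ (1 / β) <
              ((Finset.univ.filter fun t : Fin N => ℓ ≤ x t).card : ℝ)} ≤
          ENNReal.ofReal
            (Real.exp (-(c * (k : ℝ) / (Real.log (Real.log k)) ^ (1 / β)))) := by
  have hβ0 : (0:ℝ) < β := by linarith
  have hb1 : (0:ℝ) < β - 1 := by linarith
  set Mβ : ℝ := 2 + 5 * (β - 1) + (6:ℝ) ^ (1 / (β - 1)) with hMβdef
  have h6pos : (0:ℝ) < (6:ℝ) ^ (1 / (β - 1)) := Real.rpow_pos_of_pos (by norm_num) _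
  have hMβ2 : (2:ℝ) ≤ Mβ := by rw [hMβdef]; nlinarith
  have hMβ5 : 1 + 5 * (β - 1) ≤ Mβ := by rw [hMβdef]; nlinarith
  have hMβ6 : (6:ℝ) ^ (1 / (β - 1)) ≤ Mβ := by rw [hMβdef]; nlinarith
  have hMβ0 : (0:ℝ) < Mβ := by linarith
  refine ⟨1/10, by norm_num, 16 + ⌈4 * Mβ ^ 2⌉₊, 1, ?_⟩
  intro k n hk hn ℓ N hℓn
  have hℓdef : ℓ = ⌊(k : ℝ) / (Real.log (Real.log k)) ^ (1 / β)⌋₊ + 1 := rfl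
  have hNdef : N = ⌊(k : ℝ) ^ β / Real.log (Real.log k)⌋₊ := rfl
  set L : ℝ := Real.log (Real.log k) with hLdef
  set s : ℝ := L ^ (1 / β) with hsdef
  set m : ℝ := (k : ℝ) / s with hmdef
  -- basic facts about k
  have hk16 : (16:ℕ) ≤ k := by omega
  have hkR : (16:ℝ) ≤ (k:ℝ) := by exact_mod_cast hk16
  have hk0 : (0:ℝ) < (k:ℝ) := by linarith
  have hlogk : Real.exp 1 ≤ Real.log k := by
    have h1 : Real.log 16 ≤ Real.log k := Real.log_le_log (by norm_num) hkR
    have h2 : Real.log 16 = 4 * Real.log 2 := by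
      rw [show (16:ℝ) = 2 ^ (4:ℕ) by norm_num, Real.log_pow]
      push_cast; ring
    have h3 := Real.log_two_gt_d9
    have h4 := Real.exp_one_lt_d9
    rw [h2] at h1
    linarith
  have hlogk0 : 0 < Real.log k := lt_of_lt_of_le (Real.exp_pos 1) hlogk
  have hL1 : 1 ≤ L := by
    rw [hLdef, ← Real.log_exp 1]
    exact Real.log_le_log (Real.exp_pos 1) hlogk
  have hL0 : 0 < L := by linarith
  have hs1 : 1 ≤ s := Real.one_le_rpow hL1 (by positivity)
  have hs0 : 0 < s := by linarith
  have hm0 : 0 < m := by rw [hmdef]; positivity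
  -- m ≥ √k / 2 ≥ Mβ
  have hsqrtk0 : 0 < Real.sqrt k := Real.sqrt_pos.mpr hk0
  have hs_le : s ≤ 2 * Real.sqrt k := by
    have h1 : s ≤ L := by
      rw [hsdef]
      calc L ^ (1/β) ≤ L ^ (1:ℝ) :=
            Real.rpow_le_rpow_of_exponent_le hL1 (by rw [div_le_one hβ0]; linarith)
        _ = L := Real.rpow_one L
    have h2 : L ≤ Real.log k := by
      rw [hLdef]
      exact Real.log_le_self hlogk0.le
    have h3 : Real.log k ≤ 2 * Real.sqrt k := by
      have h4 : Real.log k = 2 * Real.log (Real.sqrt k) := by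
        conv_lhs => rw [← Real.sq_sqrt hk0.le]
        rw [Real.log_pow]
        push_cast; ring
      have h5 := Real.log_le_self (Real.sqrt_nonneg k)
      linarith
    linarith
  have hsqrt_le_m : Real.sqrt k / 2 ≤ m := by
    have h1 : (k:ℝ) / (2 * Real.sqrt k) ≤ m := by
      rw [hmdef]
      exact div_le_div_of_nonneg_left hk0.le hs0 hs_le
    have h2 : (k:ℝ) / (2 * Real.sqrt k) = Real.sqrt k / 2 := by
      rw [div_eq_div_iff (by positivity : (0:ℝ) < 2 * Real.sqrt k).ne' (by norm_num : (2:ℝ) ≠ 0)]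
      linear_combination (-2 : ℝ) * Real.mul_self_sqrt hk0.le
    linarith
  have hkM : 4 * Mβ ^ 2 ≤ (k:ℝ) := by
    have h1 : (⌈4 * Mβ ^ 2⌉₊ : ℕ) ≤ k := by omega
    have h2 : ((⌈4 * Mβ ^ 2⌉₊ : ℕ) : ℝ) ≤ (k:ℝ) := by exact_mod_cast h1
    exact le_trans (Nat.le_ceil _) h2
  have hMm : Mβ ≤ m := by
    have h1 : 2 * Mβ ≤ Real.sqrt k := by
      rw [show (2 * Mβ) = Real.sqrt ((2*Mβ)^2) from (Real.sqrt_sq (by linarith)).symm]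
      exact Real.sqrt_le_sqrt (by nlinarith)
    linarith
  have hm2 : (2:ℝ) ≤ m := le_trans hMβ2 hMm
  have hm5 : 1 + 5 * (β - 1) ≤ m := le_trans hMβ5 hMm
  have hm6 : (6:ℝ) ≤ m ^ (β - 1) := by
    calc (6:ℝ) = ((6:ℝ) ^ (1/(β-1))) ^ (β-1) := by
          rw [← Real.rpow_mul (by norm_num), one_div_mul_cancel hb1.ne', Real.rpow_one]
      _ ≤ m ^ (β - 1) := Real.rpow_le_rpow h6pos.le (le_trans hMβ6 hMm) hb1.le
  -- ℓ facts
  have hmℓ : m < (ℓ : ℝ) := by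
    rw [hℓdef]
    push_cast
    exact Nat.lt_floor_add_one m
  have hℓ1 : m - 1 < ((ℓ - 1 : ℕ) : ℝ) := by
    have : (ℓ - 1 : ℕ) = ⌊m⌋₊ := by rw [hℓdef]; omega
    rw [this]
    exact Nat.sub_one_lt_floor m
  have hℓ2 : 2 ≤ ℓ := by
    rw [hℓdef]
    have : 1 ≤ ⌊m⌋₊ := Nat.le_floor (by exact_mod_cast (by linarith : (1:ℝ) ≤ m))
    omega
  -- the tail mass bound
  set Z : ℝ := ∑ j ∈ Finset.Icc 1 n, (j : ℝ) ^ (-β) with hZdef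
  set T : ℝ := ∑ i ∈ Finset.Icc ℓ n, (i : ℝ) ^ (-β) with hTdef
  set q : ℝ := ∑ i ∈ Finset.Icc ℓ n, zipfP β n i with hqdef
  have hq_eq : q = T / Z := by
    rw [hqdef, hTdef, Finset.sum_div]
    refine Finset.sum_congr rfl fun i hi => ?_
    rw [zipfP, if_pos]
    rw [Finset.mem_Icc] at hi ⊢
    omega
  have hq0 : 0 ≤ q := Finset.sum_nonneg fun i _ => zipfP_nonneg β n i
  have hT : T ≤ (m - 1) ^ (1 - β) / (β - 1) := by
    refine le_trans (tail_upper hβ ℓ n hℓ2) ?_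
    have h1 : ((ℓ - 1 : ℕ) : ℝ) ^ (1 - β) ≤ (m - 1) ^ (1 - β) :=
      Real.rpow_le_rpow_of_nonpos (by linarith) hℓ1.le (by linarith)
    exact (div_le_div_iff_of_pos_right hb1).mpr h1
  have hZ : (5/6) / (β - 1) ≤ Z := by
    refine le_trans ?_ (Zlower hβ n)
    have hmn : m ≤ (n:ℝ) + 1 := by
      have : (ℓ : ℝ) ≤ (n : ℝ) := by exact_mod_cast hℓn
      linarith
    have h1 : ((n:ℝ) + 1) ^ (1 - β) ≤ m ^ (1 - β) :=
      Real.rpow_le_rpow_of_nonpos hm0 hmn (by linarith)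
    have h2 : m ^ (1 - β) ≤ 1/6 := by
      rw [show (1 - β) = -(β - 1) by ring, Real.rpow_neg hm0.le]
      rw [inv_le_comm₀ (by positivity) (by norm_num)]
      linarith [hm6]
    exact (div_le_div_iff_of_pos_right hb1).mpr (by linarith)
  have hq_le : q ≤ (6/5) * (m - 1) ^ (1 - β) := by
    rw [hq_eq]
    have hZpos : (0:ℝ) < (5/6) / (β - 1) := by positivity
    have hT0 : 0 ≤ (m - 1) ^ (1 - β) / (β - 1) :=
      div_nonneg (Real.rpow_nonneg (by linarith) _) hb1.le
    calc T / Z ≤ ((m - 1) ^ (1 - β) / (β - 1)) / ((5/6) / (β - 1)) :=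
          div_le_div₀ hT0 hT hZpos hZ
      _ = (6/5) * (m - 1) ^ (1 - β) := by
          field_simp
  have hsβ : s ^ β = L := by
    rw [hsdef, ← Real.rpow_mul hL0.le, one_div_mul_cancel hβ0.ne', Real.rpow_one]
  have hN : (N : ℝ) ≤ m ^ β := by
    have h1 : (N : ℝ) ≤ (k:ℝ) ^ β / L := Nat.floor_le (by positivity)
    have h2 : m ^ β = (k:ℝ) ^ β / L := by
      rw [hmdef, Real.div_rpow hk0.le hs0.le, hsβ]
    rw [hNdef] at h1 ⊢
    linarith [h1, h2.ge]
  have hmβ0 : (0:ℝ) ≤ m ^ β := by positivity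
  -- N q ≤ (3/2) m
  have hkey : m ^ β * (m - 1) ^ (1 - β) ≤ (5/4) * m := by
    have hm1 : (0:ℝ) < m - 1 := by linarith
    have e1 : m ^ β = m * m ^ (β - 1) := by
      rw [show β = 1 + (β - 1) by ring, Real.rpow_add hm0, Real.rpow_one]
      ring_nf
    have e2 : m ^ (β - 1) * (m - 1) ^ (1 - β) = (m / (m - 1)) ^ (β - 1) := by
      rw [Real.div_rpow hm0.le hm1.le, show (1 - β) = -(β - 1) by ring,
        Real.rpow_neg hm1.le, div_eq_mul_inv]
    have e3 : (m / (m - 1)) ^ (β - 1) ≤ 5/4 := by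
      have h1 : m / (m - 1) = 1 + 1 / (m - 1) := by field_simp; ring
      have h2 : (1:ℝ) + 1 / (m - 1) ≤ Real.exp (1 / (m - 1)) := by
        have := Real.add_one_le_exp (1 / (m - 1))
        linarith
      have h3 : (m / (m - 1)) ^ (β - 1) ≤ Real.exp (1 / (m - 1)) ^ (β - 1) := by
        rw [h1]
        exact Real.rpow_le_rpow (by positivity) h2 hb1.le
      have h4 : Real.exp (1 / (m - 1)) ^ (β - 1) = Real.exp ((β - 1) / (m - 1)) := by
        rw [← Real.exp_mul]
        ring_nf
      have h5 : (β - 1) / (m - 1) ≤ 1/5 := by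
        rw [div_le_div_iff₀ hm1 (by norm_num)]
        linarith
      have h6 : Real.exp ((β - 1) / (m - 1)) ≤ Real.exp (1/5) := Real.exp_le_exp.mpr h5
      have h7 : Real.exp (1/5) < 5/4 := by
        have h8 : Real.exp (1/5) ^ (5:ℕ) < (5/4:ℝ) ^ (5:ℕ) := by
          rw [← Real.exp_nat_mul]
          norm_num
          linarith [Real.exp_one_lt_d9]
        exact lt_of_pow_lt_pow_left₀ 5 (by norm_num) h8
      rw [h4] at h3
      linarith
    have hrpos : (0:ℝ) ≤ (m - 1) ^ (1 - β) := by positivity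
    calc m ^ β * (m - 1) ^ (1 - β) = m * (m ^ (β - 1) * (m - 1) ^ (1 - β)) := by
          rw [e1]; ring
      _ = m * (m / (m - 1)) ^ (β - 1) := by rw [e2]
      _ ≤ m * (5/4) := by
          apply mul_le_mul_of_nonneg_left e3 hm0.le
      _ = (5/4) * m := by ring
  have hNq : (N : ℝ) * q ≤ (3/2) * m := by
    calc (N : ℝ) * q ≤ m ^ β * ((6/5) * (m - 1) ^ (1 - β)) :=
          mul_le_mul hN hq_le hq0 hmβ0
      _ = (6/5) * (m ^ β * (m - 1) ^ (1 - β)) := by ring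
      _ ≤ (6/5) * ((5/4) * m) := by
          apply mul_le_mul_of_nonneg_left hkey (by norm_num)
      _ = (3/2) * m := by ring
  -- apply the Chernoff core bound
  have hcore := chernoff_core β N (by omega) (by omega) hℓn
    ((2 / 0.9) * (k : ℝ) / s) (by positivity)
  rw [← hqdef] at hcore
  refine le_trans hcore (ENNReal.ofReal_le_ofReal (Real.exp_le_exp.mpr ?_))
  have hexphalf : Real.exp 2⁻¹ ≤ 1.6488 := by
    have h8 : Real.exp 2⁻¹ ^ (2:ℕ) < (1.6488:ℝ) ^ (2:ℕ) := by
      rw [← Real.exp_nat_mul]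
      norm_num
      linarith [Real.exp_one_lt_d9]
    exact (lt_of_pow_lt_pow_left₀ 2 (by norm_num) h8).le
  have hexphalf0 : (1:ℝ) ≤ Real.exp 2⁻¹ := by
    rw [← Real.exp_zero]
    exact Real.exp_le_exp.mpr (by norm_num)
  have ha : (2 / 0.9) * (k : ℝ) / s = (20/9) * m := by
    rw [hmdef, mul_div_assoc]
    norm_num
  have hc : (1/10 : ℝ) * (k : ℝ) / s = m / 10 := by
    rw [hmdef]; ring
  rw [ha, hc]
  have hNq' : (0:ℝ) ≤ (N:ℝ) * q := mul_nonneg (Nat.cast_nonneg N) hq0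
  have h9 : (N:ℝ) * q * (Real.exp 2⁻¹ - 1) ≤ (3/2) * m * (1.6488 - 1) :=
    mul_le_mul hNq (by linarith) (by linarith) (by linarith)
  linarith [hm0.le]
end

section
/- Model an LRU cache of capacity k as a duplicate-free list of contents ordered from most recently to least recently requested: on a request r, if r is in the list it is moved to the front; otherwise r is prepended and, if the list then has more than k elements, the last element is removed. Let r_1, …, r_T be any request sequence with T ≥ W ≥ 1, and let D be the set of distinct contents appearing among the last W requests r_{T−W+1}, …, r_T. If |D| ≤ k, then after processing r_1, …, r_T (starting from any duplicate-free initial list of length at most k), every element of D is stored in the cache. -/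
/-- One step of the LRU policy on a cache of capacity `k`, modeled as a duplicate-free
list ordered from most recently to least recently requested: the request `r` is moved
(or inserted) to the front, and if the list then exceeds length `k`, the last (least
recently used) element is dropped. -/
def lruStep (k : ℕ) (l : List ℕ) (r : ℕ) : List ℕ :=
  ((r :: l.erase r).take k)

lemma lruStep_nodup {k : ℕ} {l : List ℕ} {r : ℕ} (h : l.Nodup) : (lruStep k l r).Nodup := by
  apply List.Nodup.sublist (List.take_sublist _ _)
  exact List.nodup_cons.2 ⟨fun h' => ((List.Nodup.mem_erase_iff h).1 h').1 rfl, h.erase r⟩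

lemma lruStep_len {k : ℕ} {l : List ℕ} {r : ℕ} : (lruStep k l r).length ≤ k :=
  List.length_take_le _ _

lemma foldl_lru_nodup {k : ℕ} : ∀ (s : List ℕ) (l : List ℕ), l.Nodup →
    (s.foldl (lruStep k) l).Nodup := by
  intro s
  induction s with
  | nil => intro l h; exact h
  | cons a t ih => intro l h; exact ih _ (lruStep_nodup h)

lemma foldl_lru_len {k : ℕ} : ∀ (s : List ℕ) (l : List ℕ), l.length ≤ k →
    (s.foldl (lruStep k) l).length ≤ k := by
  intro s
  induction s with
  | nil => intro l h; exact h
  | cons a t ih => intro l h; exact ih _ lruStep_len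

lemma mem_take_mono {x : ℕ} : ∀ (l : List ℕ) (n m : ℕ), n ≤ m → x ∈ l.take n → x ∈ l.take m := by
  intro l n m h hx
  exact List.IsPrefix.mem hx (List.take_prefix_take_left h)

lemma mem_take_erase {x a : ℕ} : ∀ (l : List ℕ) (n m : ℕ),
    x ∈ l.take n → x ≠ a →
    ((a ∈ l.take n ∧ n ≤ m + 1) ∨ n ≤ m) → x ∈ (l.erase a).take m := by
  intro l
  induction l with
  | nil => intro n m hx; simp at hx
  | cons b t ih =>
    intro n m hx hxa hcond
    cases n with
    | zero => simp at hx
    | succ n =>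
      rw [List.take_succ_cons] at hx
      by_cases hba : b = a
      · subst hba
        rw [List.erase_cons_head]
        have hx' : x ∈ t.take n := by
          rcases List.mem_cons.1 hx with h | h
          · exact absurd h hxa
          · exact h
        have hnm : n ≤ m := by
          rcases hcond with ⟨_, h⟩ | h <;> omega
        exact mem_take_mono _ n m hnm hx'
      · rw [List.erase_cons_tail (by simpa using hba)]
        have hm1 : 1 ≤ m := by
          rcases hcond with ⟨ha, h⟩ | h
          · rcases List.mem_cons.1 ha with h' | h'
            · exact absurd h'.symm hba
            · have : n ≥ 1 := by
                by_contra hn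
                push_neg at hn
                interval_cases n <;> simp_all
              omega
          · omega
        obtain ⟨m', rfl⟩ : ∃ m', m = m' + 1 := ⟨m - 1, by omega⟩
        rw [List.take_succ_cons]
        rcases List.mem_cons.1 hx with h | h
        · subst h; exact List.mem_cons_self
        · refine List.mem_cons_of_mem _ (ih n m' h hxa ?_)
          rcases hcond with ⟨ha, hle⟩ | hle
          · rcases List.mem_cons.1 ha with h' | h'
            · exact absurd h'.symm hba
            · exact Or.inl ⟨h', by omega⟩
          · exact Or.inr (by omega)

lemma lru_key (k : ℕ) : ∀ (s : List ℕ) (S : Finset ℕ) (l : List ℕ),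
    l.Nodup → l.length ≤ k → (∀ x ∈ S, x ∈ l.take S.card) →
    (S ∪ s.toFinset).card ≤ k →
    ∀ x ∈ S ∪ s.toFinset, x ∈ (s.foldl (lruStep k) l).take (S ∪ s.toFinset).card := by
  intro s
  induction s with
  | nil =>
    intro S l hnd hlen hS hcard x hx
    simpa using hS x (by simpa using hx)
  | cons a t ih =>
    intro S l hnd hlen hS hcard x hx
    have hset : S ∪ (a :: t).toFinset = insert a S ∪ t.toFinset := by
      ext y; simp
    rw [hset] at hx hcard ⊢
    rw [List.foldl_cons]
    have hcardS' : (insert a S).card ≤ k :=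
      le_trans (Finset.card_le_card (Finset.subset_union_left)) hcard
    refine ih (insert a S) (lruStep k l a) (lruStep_nodup hnd) lruStep_len ?_ hcard x hx
    intro y hy
    have hc1 : 1 ≤ (insert a S).card := Finset.card_pos.2 ⟨a, Finset.mem_insert_self a S⟩
    have htake : (lruStep k l a).take (insert a S).card
        = (a :: l.erase a).take (insert a S).card := by
      rw [lruStep, List.take_take, min_eq_left hcardS']
    rw [htake]
    obtain ⟨c', hc'⟩ : ∃ c', (insert a S).card = c' + 1 := ⟨(insert a S).card - 1, by omega⟩
    rw [hc', List.take_succ_cons]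
    rcases Finset.mem_insert.1 hy with rfl | hyS
    · exact List.mem_cons_self
    · by_cases hya : y = a
      · subst hya; exact List.mem_cons_self
      · refine List.mem_cons_of_mem _ ?_
        refine mem_take_erase l S.card c' (hS y hyS) hya ?_
        by_cases haS : a ∈ S
        · have : (insert a S).card = S.card := by rw [Finset.insert_eq_self.2 haS]
          exact Or.inl ⟨hS a haS, by omega⟩
        · have : (insert a S).card = S.card + 1 := Finset.card_insert_of_notMem haS
          exact Or.inr (by omega)

/-- Deterministic LRU property (key step in Theorem 4 / Lemma 6 of the paper): if the
set `D` of distinct contents appearing among the last `W` requests (`1 ≤ W ≤ T`) has at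
most `k` elements, then after processing the whole request sequence (from any
duplicate-free initial cache of length at most `k`) every element of `D` is in the
cache. -/
theorem lru_contains_recent (k W : ℕ) (hW : 1 ≤ W)
    (init : List ℕ) (hnd : init.Nodup) (hlen : init.length ≤ k)
    (reqs : List ℕ) (hT : W ≤ reqs.length)
    (hD : ((reqs.drop (reqs.length - W)).toFinset).card ≤ k) :
    ∀ x ∈ (reqs.drop (reqs.length - W)).toFinset,
      x ∈ reqs.foldl (lruStep k) init := by
  intro x hx
  set s := reqs.drop (reqs.length - W) with hs
  have hsplit : reqs = reqs.take (reqs.length - W) ++ s := (List.take_append_drop _ _).symm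
  rw [hsplit, List.foldl_append]
  set l0 := (reqs.take (reqs.length - W)).foldl (lruStep k) init with hl0
  have hnd0 : l0.Nodup := foldl_lru_nodup _ _ hnd
  have hlen0 : l0.length ≤ k := foldl_lru_len _ _ hlen
  have := lru_key k s ∅ l0 hnd0 hlen0 (by simp) (by simpa using hD) x (by simpa using hx)
  exact List.take_subset _ _ this
end

section
/- Let n ∈ ℕ and let p : {1,…,n} → ℝ be nonnegative and nonincreasing. Let (Ω, P) be a probability space, let L : Ω → ℕ be an integrable random variable, and let m, k ≥ 1. Then E[ Σ_{i = m(k+L)+1}^{n} p_i ] ≥ Σ_{i = m(k + ⌈E[L]⌉) + 1}^{n} p_i, where the inner sum is taken to be 0 when its lower limit exceeds n. -/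
open MeasureTheory

/-- Jensen-type step in Lemma 8 of the paper: for nonnegative nonincreasing `p` on
`{1,…,n}`, an integrable `ℕ`-valued random variable `L` and `m, k ≥ 1`,
`E[∑_{i=m(k+L)+1}^n p i] ≥ ∑_{i=m(k+⌈E[L]⌉)+1}^n p i` (the inner sum being `0` when its
lower limit exceeds `n`). -/
theorem jensen_tail_sum (n m k : ℕ) (hm : 1 ≤ m) (hk : 1 ≤ k)
    (p : ℕ → ℝ)
    (hnn : ∀ i ∈ Finset.Icc 1 n, 0 ≤ p i)
    (hmono : ∀ i j : ℕ, 1 ≤ i → i ≤ j → j ≤ n → p j ≤ p i)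
    {Ω : Type*} [MeasurableSpace Ω] (P : Measure Ω) [IsProbabilityMeasure P]
    (L : Ω → ℕ) (hL : Measurable L)
    (hLint : Integrable (fun ω => (L ω : ℝ)) P) :
    ∑ i ∈ Finset.Icc (m * (k + ⌈∫ ω, (L ω : ℝ) ∂P⌉₊) + 1) n, p i ≤
      ∫ ω, (∑ i ∈ Finset.Icc (m * (k + L ω) + 1) n, p i) ∂P := by
  classical
  set μ : ℝ := ∫ ω, (L ω : ℝ) ∂P with hμ
  set c : ℕ := ⌈μ⌉₊ with hc
  set q : ℕ → ℝ := fun i => if 1 ≤ i ∧ i ≤ n then p i else 0 with hqdef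
  set g : ℕ → ℝ := fun a => ∑ i ∈ Finset.Icc (a + 1) n, p i with hgdef
  set f : ℕ → ℝ := fun ℓ => g (m * (k + ℓ)) with hfdef
  have hq_nonneg : ∀ i, 0 ≤ q i := by
    intro i
    simp only [hqdef]
    split
    · exact hnn i (Finset.mem_Icc.mpr (by omega))
    · exact le_refl 0
  have hq_anti : ∀ i j : ℕ, 1 ≤ i → i ≤ j → q j ≤ q i := by
    intro i j hi hij
    simp only [hqdef]
    by_cases hj : 1 ≤ j ∧ j ≤ n
    · rw [if_pos hj, if_pos ⟨hi, le_trans hij hj.2⟩]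
      exact hmono i j hi hij hj.2
    · rw [if_neg hj]
      split
      · exact hnn i (Finset.mem_Icc.mpr (by omega))
      · exact le_refl 0
  have hg_step : ∀ a : ℕ, g a = q (a + 1) + g (a + 1) := by
    intro a
    by_cases h : a + 1 ≤ n
    · have : Finset.Icc (a + 1) n = Finset.cons (a + 1) (Finset.Ioc (a + 1) n)
        (by simp) := Finset.Icc_eq_cons_Ioc h
      simp only [hgdef, hqdef]
      rw [this, Finset.sum_cons, if_pos ⟨by omega, h⟩]
      congr 1
      rw [← Finset.Icc_add_one_left_eq_Ioc]
    · have h1 : Finset.Icc (a + 1) n = ∅ := Finset.Icc_eq_empty (by omega)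
      have h2 : Finset.Icc (a + 1 + 1) n = ∅ := Finset.Icc_eq_empty (by omega)
      simp only [hgdef, hqdef, h1, h2, Finset.sum_empty]
      rw [if_neg (by omega)]
      ring
  have hg_block : ∀ a t : ℕ, g a = (∑ j ∈ Finset.range t, q (a + 1 + j)) + g (a + t) := by
    intro a t
    induction t with
    | zero => simp
    | succ t ih =>
      rw [Finset.sum_range_succ, ih, hg_step (a + t)]
      have h1 : a + 1 + t = a + t + 1 := by omega
      have h2 : a + (t + 1) = a + t + 1 := by omega
      rw [h1, h2]
      ring
  set d : ℕ → ℝ := fun ℓ => ∑ j ∈ Finset.range m, q (m * (k + ℓ) + 1 + j) with hddef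
  have hf_step : ∀ ℓ : ℕ, f ℓ = d ℓ + f (ℓ + 1) := by
    intro ℓ
    have h1 : m * (k + (ℓ + 1)) = m * (k + ℓ) + m := by ring
    simp only [hfdef, hddef, h1]
    exact hg_block (m * (k + ℓ)) m
  have hd_nonneg : ∀ ℓ, 0 ≤ d ℓ :=
    fun ℓ => Finset.sum_nonneg fun j _ => hq_nonneg _
  have hd_anti : ∀ ℓ ℓ' : ℕ, ℓ ≤ ℓ' → d ℓ' ≤ d ℓ := by
    intro ℓ ℓ' h
    apply Finset.sum_le_sum
    intro j _
    exact hq_anti _ _ (by omega) (by nlinarith)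
  -- supporting line at c
  have key : ∀ ℓ : ℕ, f c - d c * ((ℓ : ℝ) - (c : ℝ)) ≤ f ℓ := by
    intro ℓ
    rcases le_total c ℓ with h | h
    · obtain ⟨t, rfl⟩ := Nat.exists_eq_add_of_le h
      have main : ∀ t : ℕ, f c - d c * t ≤ f (c + t) := by
        intro t
        induction t with
        | zero => simp
        | succ t ih =>
          have h1 : f (c + t) = d (c + t) + f (c + t + 1) := hf_step (c + t)
          have h2 : d (c + t) ≤ d c := hd_anti c (c + t) (by omega)
          have h3 : (c + (t + 1) : ℕ) = (c + t + 1 : ℕ) := by omega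
          rw [h3]
          push_cast
          nlinarith [ih]
      have := main t
      push_cast
      push_cast at this
      linarith
    · obtain ⟨t, ht⟩ := Nat.exists_eq_add_of_le h
      have main : ∀ t : ℕ, ∀ ℓ : ℕ, ℓ + t = c → f c + d c * t ≤ f ℓ := by
        intro t
        induction t with
        | zero => intro ℓ hℓ; simp [← hℓ]
        | succ t ih =>
          intro ℓ hℓ
          have h1 : f ℓ = d ℓ + f (ℓ + 1) := hf_step ℓ
          have h2 : d c ≤ d ℓ := hd_anti ℓ c (by omega)
          have h3 := ih (ℓ + 1) (by omega)
          push_cast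
          nlinarith
      have h4 := main t ℓ (by omega)
      have h5 : (ℓ : ℝ) - (c : ℝ) = -(t : ℝ) := by
        have : (c : ℝ) = (ℓ : ℝ) + (t : ℝ) := by exact_mod_cast ht
        linarith
      rw [h5]
      linarith
  -- boundedness and integrability
  set B : ℝ := ∑ i ∈ Finset.Icc 1 n, p i with hBdef
  have hf_nonneg : ∀ ℓ, 0 ≤ f ℓ := by
    intro ℓ
    apply Finset.sum_nonneg
    intro i hi
    exact hnn i (Finset.mem_Icc.mpr (by simp only [Finset.mem_Icc] at hi; omega))
  have hf_le : ∀ ℓ, f ℓ ≤ B := by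
    intro ℓ
    apply Finset.sum_le_sum_of_subset_of_nonneg
    · intro i hi
      simp only [Finset.mem_Icc] at hi ⊢
      omega
    · intro i hi _
      exact hnn i hi
  have hfL_meas : Measurable (fun ω => f (L ω)) := by
    have : (fun ω => f (L ω)) = f ∘ L := rfl
    rw [this]
    exact measurable_from_top.comp hL
  have hint_f : Integrable (fun ω => f (L ω)) P := by
    apply (integrable_const B).mono' hfL_meas.aestronglyMeasurable
    apply ae_of_all
    intro ω
    rw [Real.norm_eq_abs, abs_of_nonneg (hf_nonneg _)]
    exact hf_le _
  have hint1 : Integrable (fun ω => (L ω : ℝ) - (c : ℝ)) P := hLint.sub (integrable_const _)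
  have hint2 : Integrable (fun ω => d c * ((L ω : ℝ) - (c : ℝ))) P := hint1.const_mul _
  have hint_aff : Integrable (fun ω => f c - d c * ((L ω : ℝ) - (c : ℝ))) P :=
    (integrable_const _).sub hint2
  have e1 : ∫ ω, ((L ω : ℝ) - (c : ℝ)) ∂P = μ - (c : ℝ) := by
    rw [integral_sub hLint (integrable_const _), integral_const]
    simp [hμ]
  have h_int_eq : ∫ ω, (f c - d c * ((L ω : ℝ) - (c : ℝ))) ∂P
      = f c - d c * (μ - (c : ℝ)) := by
    rw [integral_sub (integrable_const _) hint2, integral_const, integral_const_mul, e1]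
    simp
  have h_mono : ∫ ω, (f c - d c * ((L ω : ℝ) - (c : ℝ))) ∂P ≤ ∫ ω, f (L ω) ∂P :=
    integral_mono hint_aff hint_f (fun ω => key (L ω))
  have hμc : μ ≤ (c : ℝ) := Nat.le_ceil μ
  have h_last : f c ≤ f c - d c * (μ - (c : ℝ)) := by
    nlinarith [hd_nonneg c]
  calc f c ≤ f c - d c * (μ - (c : ℝ)) := h_last
    _ = ∫ ω, (f c - d c * ((L ω : ℝ) - (c : ℝ))) ∂P := h_int_eq.symm
    _ ≤ ∫ ω, f (L ω) ∂P := h_mono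
end
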